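/- Let I ⊆ k[x_1,…,x_n] be an ideal and ≺ a term order. If v ∈ C_≺(I) then in_≺(in_v(I)) = in_≺(I). -/

import Mathlib

open MvPolynomial

/-- A term order on the monomials of `k[x_1,…,x_n]`, identified with exponent
vectors in `ℕ^n`: a strict total order with `1` smallest and compatible with
multiplication of monomials. -/
structure TermOrder (n : ℕ) : Type where
  lt : (Fin n →₀ ℕ) → (Fin n →₀ ℕ) → Prop
  irrefl : ∀ a, ¬ lt a a
  trans : ∀ a b c, lt a b → lt b c → lt a c
  total : ∀ a b, a ≠ b → lt a b ∨ lt b a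
  zero_lt : ∀ a, a ≠ 0 → lt 0 a
  add_right : ∀ a b c, lt a b → lt (a + c) (b + c)

variable {n : ℕ} {k : Type*} [Field k]

/-- The exponent of the `τ`-largest term of `f` (and `0` if `f = 0`). -/
noncomputable def TermOrder.leadExp (τ : TermOrder n) (f : MvPolynomial (Fin n) k) :
    Fin n →₀ ℕ :=
  letI := Classical.propDecidable (∃ α, α ∈ f.support ∧ ∀ β ∈ f.support, β ≠ α → τ.lt β α)
  if h : ∃ α, α ∈ f.support ∧ ∀ β ∈ f.support, β ≠ α → τ.lt β α then h.choose else 0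

/-- The initial term `in_τ(f)` : the `τ`-largest term of `f` (with coefficient). -/
noncomputable def TermOrder.initialTerm (τ : TermOrder n) (f : MvPolynomial (Fin n) k) :
    MvPolynomial (Fin n) k :=
  monomial (τ.leadExp f) (f.coeff (τ.leadExp f))

/-- The initial ideal `in_τ(I) = ⟨in_τ(f) : f ∈ I \ {0}⟩`. -/
noncomputable def TermOrder.initialIdeal (τ : TermOrder n) (I : Ideal (MvPolynomial (Fin n) k)) :
    Ideal (MvPolynomial (Fin n) k) :=
  Ideal.span {p | ∃ f ∈ I, f ≠ 0 ∧ p = τ.initialTerm f}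

/-- The `ω`-degree `⟨ω,α⟩` of a monomial exponent `α`. -/
noncomputable def wdeg (ω : Fin n → ℝ) (α : Fin n →₀ ℕ) : ℝ := ∑ i, ω i * (α i : ℝ)

/-- The initial form `in_ω(f)`: the sum of the terms of `f` whose exponents
maximize `⟨ω,·⟩`. -/
noncomputable def initialForm (ω : Fin n → ℝ) (f : MvPolynomial (Fin n) k) :
    MvPolynomial (Fin n) k :=
  letI : DecidablePred fun α : Fin n →₀ ℕ => ∀ β ∈ f.support, wdeg ω β ≤ wdeg ω α :=
    Classical.decPred _
  ∑ α ∈ f.support.filter (fun α => ∀ β ∈ f.support, wdeg ω β ≤ wdeg ω α),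
    monomial α (f.coeff α)

/-- The initial ideal `in_ω(I) = ⟨in_ω(f) : f ∈ I⟩`. -/
noncomputable def initialFormIdeal (ω : Fin n → ℝ) (I : Ideal (MvPolynomial (Fin n) k)) :
    Ideal (MvPolynomial (Fin n) k) :=
  Ideal.span {p | ∃ f ∈ I, p = initialForm ω f}

/-- `C_≺(I)`: the closure of `{u : in_u(I) = in_≺(I)}` in `ℝ^n`. -/
noncomputable def Cprec (τ : TermOrder n) (I : Ideal (MvPolynomial (Fin n) k)) :
    Set (Fin n → ℝ) :=
  closure {u : Fin n → ℝ | initialFormIdeal u I = τ.initialIdeal I}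

/-- `C_v(I)`: the closure of the equivalence class `{u : in_u(I) = in_v(I)}`. -/
noncomputable def Cv (I : Ideal (MvPolynomial (Fin n) k)) (v : Fin n → ℝ) :
    Set (Fin n → ℝ) :=
  closure {u : Fin n → ℝ | initialFormIdeal u I = initialFormIdeal v I}

/-- `F` is a face of `C`: either empty or the set of maximizers over `C` of a
linear functional. -/
def IsFaceOf (C F : Set (Fin n → ℝ)) : Prop :=
  F = ∅ ∨ ∃ w : Fin n → ℝ, F = {x ∈ C | ∀ y ∈ C, ∑ i, w i * y i ≤ ∑ i, w i * x i}

/-- The Gröbner fan of `I`: all nonempty faces of the cones `C_v(I)`, `v ∈ ℝ^n_{>0}`. -/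
noncomputable def GroebnerFan (I : Ideal (MvPolynomial (Fin n) k)) :
    Set (Set (Fin n → ℝ)) :=
  {F | F.Nonempty ∧ ∃ v : Fin n → ℝ, (∀ i, 0 < v i) ∧ IsFaceOf (Cv I v) F}

/-- `G` is a (finite) Gröbner basis of `I` w.r.t. `τ`. -/
def IsGroebnerBasis (τ : TermOrder n) (I : Ideal (MvPolynomial (Fin n) k))
    (G : Set (MvPolynomial (Fin n) k)) : Prop :=
  G.Finite ∧ Ideal.span G = I ∧ τ.initialIdeal I = Ideal.span (τ.initialTerm '' G)

/-- `G` is the reduced Gröbner basis of `I` w.r.t. `τ`. -/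
def IsReducedGroebnerBasis (τ : TermOrder n) (I : Ideal (MvPolynomial (Fin n) k))
    (G : Set (MvPolynomial (Fin n) k)) : Prop :=
  IsGroebnerBasis τ I G ∧
  (∀ g ∈ G, g.coeff (τ.leadExp g) = 1) ∧
  (∀ g ∈ G, ∀ α ∈ g.support, α ≠ τ.leadExp g →
    (monomial α 1 : MvPolynomial (Fin n) k) ∉ τ.initialIdeal I) ∧
  (∀ g ∈ G, Ideal.span (τ.initialTerm '' (G \ {g})) ≠ τ.initialIdeal I)

section Aux
variable {n : ℕ} {k : Type*} [Field k] (τ : TermOrder n)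

lemma tau_asymm {a b : Fin n →₀ ℕ} (h : τ.lt a b) : ¬ τ.lt b a :=
  fun h' => τ.irrefl a (τ.trans _ _ _ h h')

lemma tau_finset_max {s : Finset (Fin n →₀ ℕ)} (hs : s.Nonempty) :
    ∃ α ∈ s, ∀ β ∈ s, β ≠ α → τ.lt β α := by
  classical
  induction s using Finset.induction with
  | empty => exact absurd hs (by simp)
  | @insert a s ha ih =>
    rcases s.eq_empty_or_nonempty with rfl | hs'
    · exact ⟨a, by simp, by simp⟩
    · obtain ⟨α, hα, hmax⟩ := ih hs'
      by_cases hne : a = α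
      · subst hne
        exact ⟨a, Finset.mem_insert_self _ _, fun β hβ hβne => by
          rcases Finset.mem_insert.1 hβ with rfl | hβs
          · exact absurd rfl hβne
          · exact hmax β hβs hβne⟩
      rcases τ.total a α hne with h | h
      · refine ⟨α, Finset.mem_insert_of_mem hα, fun β hβ hβne => ?_⟩
        rcases Finset.mem_insert.1 hβ with rfl | hβs
        · exact h
        · exact hmax β hβs hβne
      · refine ⟨a, Finset.mem_insert_self _ _, fun β hβ hβne => ?_⟩
        rcases Finset.mem_insert.1 hβ with rfl | hβs
        · exact absurd rfl hβne
        · rcases eq_or_ne β α with rfl | hβα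
          · exact h
          · exact τ.trans _ _ _ (hmax β hβs hβα) h

lemma tau_leadExp_spec {f : MvPolynomial (Fin n) k} (hf : f ≠ 0) :
    τ.leadExp f ∈ f.support ∧ ∀ β ∈ f.support, β ≠ τ.leadExp f → τ.lt β (τ.leadExp f) := by
  classical
  have hne : f.support.Nonempty := by
    rwa [MvPolynomial.support_nonempty]
  have hex : ∃ α, α ∈ f.support ∧ ∀ β ∈ f.support, β ≠ α → τ.lt β α := by
    obtain ⟨α, hα, hmax⟩ := tau_finset_max τ hne
    exact ⟨α, hα, hmax⟩
  rw [TermOrder.leadExp, dif_pos hex]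
  exact hex.choose_spec

lemma tau_leadExp_eq {f : MvPolynomial (Fin n) k} {α : Fin n →₀ ℕ}
    (hmem : α ∈ f.support) (hmax : ∀ β ∈ f.support, β ≠ α → τ.lt β α) :
    τ.leadExp f = α := by
  have hf : f ≠ 0 := by
    intro h; rw [h] at hmem; simp at hmem
  obtain ⟨hmem', hmax'⟩ := tau_leadExp_spec τ hf
  by_contra hne
  exact tau_asymm τ (hmax _ hmem' hne) (hmax' _ hmem (Ne.symm hne))

lemma tau_coeff_leadExp_ne_zero {f : MvPolynomial (Fin n) k} (hf : f ≠ 0) :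
    f.coeff (τ.leadExp f) ≠ 0 :=
  MvPolynomial.mem_support_iff.1 (tau_leadExp_spec τ hf).1

lemma tau_wf : WellFounded τ.lt := by
  haveI : IsIrrefl (Fin n →₀ ℕ) τ.lt := ⟨τ.irrefl⟩
  haveI : IsTrans (Fin n →₀ ℕ) τ.lt := ⟨τ.trans⟩
  haveI : IsStrictOrder (Fin n →₀ ℕ) τ.lt := { }
  rw [RelEmbedding.wellFounded_iff_isEmpty]
  constructor
  rintro f
  obtain ⟨m, m', hmm', hle⟩ := wellQuasiOrdered_le (fun i => f i)
  have hlt : τ.lt (f m') (f m) := f.map_rel_iff.2 hmm'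
  rcases eq_or_ne (f m' - f m) 0 with h0 | h0
  · have : f m' = f m := le_antisymm (by rwa [tsub_eq_zero_iff_le] at h0) hle
    rw [this] at hlt; exact τ.irrefl _ hlt
  · have h1 : τ.lt (f m) (f m') := by
      have := τ.add_right 0 (f m' - f m) (f m) (τ.zero_lt _ h0)
      rwa [zero_add, tsub_add_cancel_of_le hle] at this
    exact τ.irrefl _ (τ.trans _ _ _ hlt h1)

end Aux
section Aux2
open MvPolynomial
open scoped Classical
variable {n : ℕ} {k : Type*} [Field k] (τ : TermOrder n)

/-- `α` is a `ω`-weight-maximal exponent for `f`. -/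
def isMaxIn (ω : Fin n → ℝ) (f : MvPolynomial (Fin n) k) (α : Fin n →₀ ℕ) : Prop :=
  ∀ β ∈ f.support, wdeg ω β ≤ wdeg ω α

lemma coeff_initialForm (ω : Fin n → ℝ) (f : MvPolynomial (Fin n) k) (γ : Fin n →₀ ℕ) :
    (initialForm ω f).coeff γ = if isMaxIn ω f γ then f.coeff γ else 0 := by
  classical
  rw [initialForm]
  rw [MvPolynomial.coeff_sum]
  simp only [MvPolynomial.coeff_monomial]
  rw [Finset.sum_ite_eq' _ γ (fun α => f.coeff α)]
  by_cases hmax : isMaxIn ω f γ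
  · by_cases hs : γ ∈ f.support
    · rw [if_pos, if_pos hmax]
      simp only [Finset.mem_filter]
      exact ⟨hs, hmax⟩
    · rw [if_neg, if_pos hmax, MvPolynomial.notMem_support_iff.1 hs]
      simp only [Finset.mem_filter]
      tauto
  · rw [if_neg, if_neg hmax]
    simp only [Finset.mem_filter]
    tauto

lemma mem_support_initialForm {ω : Fin n → ℝ} {f : MvPolynomial (Fin n) k} {γ : Fin n →₀ ℕ} :
    γ ∈ (initialForm ω f).support ↔ γ ∈ f.support ∧ isMaxIn ω f γ := by
  rw [MvPolynomial.mem_support_iff, coeff_initialForm]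
  by_cases hmax : isMaxIn ω f γ
  · rw [if_pos hmax]
    simp [MvPolynomial.mem_support_iff, hmax]
  · rw [if_neg hmax]
    simp [hmax]

lemma initialForm_ne_zero {ω : Fin n → ℝ} {f : MvPolynomial (Fin n) k} (hf : f ≠ 0) :
    initialForm ω f ≠ 0 := by
  have hne : f.support.Nonempty := by rwa [MvPolynomial.support_nonempty]
  obtain ⟨α, hα, hmax⟩ := Finset.exists_max_image f.support (wdeg ω) hne
  have : α ∈ (initialForm ω f).support :=
    mem_support_initialForm.2 ⟨hα, fun β hβ => hmax β hβ⟩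
  intro h
  rw [h] at this; simp at this

lemma wdeg_add (ω : Fin n → ℝ) (α β : Fin n →₀ ℕ) :
    wdeg ω (α + β) = wdeg ω α + wdeg ω β := by
  rw [wdeg, wdeg, wdeg, ← Finset.sum_add_distrib]
  refine Finset.sum_congr rfl fun i _ => ?_
  simp [Finsupp.add_apply, Nat.cast_add]
  ring

/-- Monomial-ideal support lemma: an exponent in the support of a member of an ideal
generated by monomials is divisible by one of the generating exponents. -/
lemma exists_dvd_of_mem_span_monomials {P : Set (MvPolynomial (Fin n) k)}
    (hP : ∀ p ∈ P, ∃ μ c, p = monomial μ c)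
    {f : MvPolynomial (Fin n) k} (hf : f ∈ Ideal.span P)
    {α : Fin n →₀ ℕ} (hα : α ∈ f.support) :
    ∃ p ∈ P, ∃ μ c, c ≠ 0 ∧ p = monomial μ c ∧ μ ≤ α := by
  classical
  obtain ⟨c, hcsupp, hsum⟩ := Submodule.mem_span_set.1 hf
  have hcoeff : f.coeff α ≠ 0 := MvPolynomial.mem_support_iff.1 hα
  rw [← hsum] at hcoeff
  rw [Finsupp.sum] at hcoeff
  have : (∑ p ∈ c.support, (c p • p).coeff α) ≠ 0 := by
    rwa [← MvPolynomial.coeff_sum]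
  obtain ⟨p, hps, hpne⟩ := Finset.exists_ne_zero_of_sum_ne_zero this
  have hpP : p ∈ P := hcsupp hps
  obtain ⟨μ, d, hpeq⟩ := hP p hpP
  rw [smul_eq_mul, hpeq, MvPolynomial.coeff_mul_monomial'] at hpne
  by_cases hle : μ ≤ α
  · rw [if_pos hle] at hpne
    refine ⟨p, hpP, μ, d, fun hd => hpne ?_, hpeq, hle⟩
    rw [hd, mul_zero]
  · rw [if_neg hle] at hpne
    exact absurd rfl hpne

lemma monomial_one_mem_of_mem_span_monomials {P : Set (MvPolynomial (Fin n) k)}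
    (hP : ∀ p ∈ P, ∃ μ c, p = monomial μ c)
    {f : MvPolynomial (Fin n) k} (hf : f ∈ Ideal.span P)
    {α : Fin n →₀ ℕ} (hα : α ∈ f.support) :
    (monomial α (1 : k)) ∈ Ideal.span P := by
  obtain ⟨p, hpP, μ, d, hd, hpeq, hle⟩ := exists_dvd_of_mem_span_monomials hP hf hα
  have : (monomial α (1 : k)) = monomial (α - μ) d⁻¹ * monomial μ d := by
    rw [MvPolynomial.monomial_mul, inv_mul_cancel₀ hd, tsub_add_cancel_of_le hle]
  rw [this, ← hpeq]
  exact Ideal.mul_mem_left _ _ (Ideal.subset_span hpP)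

/-- Extract a finite generating subset of a spanning set, in a Noetherian ring. -/
lemma exists_finset_span (P : Set (MvPolynomial (Fin n) k)) :
    ∃ Q : Finset (MvPolynomial (Fin n) k), ↑Q ⊆ P ∧ Ideal.span (↑Q : Set _) = Ideal.span P := by
  classical
  have hfg : (Ideal.span P).FG := IsNoetherian.noetherian _
  obtain ⟨T, hT⟩ := hfg
  have hchoice : ∀ t : {x // x ∈ T}, ∃ Q : Finset (MvPolynomial (Fin n) k),
      ↑Q ⊆ P ∧ (t : MvPolynomial (Fin n) k) ∈ Ideal.span (↑Q : Set _) := by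
    rintro ⟨t, ht⟩
    have : t ∈ Ideal.span P := by
      rw [← hT]; exact Ideal.subset_span ht
    obtain ⟨Q, hQP, htQ⟩ := Submodule.mem_span_finite_of_mem_span this
    exact ⟨Q, hQP, htQ⟩
  choose Qf hQfP hQft using hchoice
  refine ⟨T.attach.biUnion Qf, ?_, ?_⟩
  · intro q hq
    obtain ⟨t, -, hqt⟩ := Finset.mem_biUnion.1 hq
    exact hQfP t hqt
  · apply le_antisymm
    · rw [Ideal.span_le]
      intro q hq
      obtain ⟨t, -, hqt⟩ := Finset.mem_biUnion.1 hq
      exact Ideal.subset_span (hQfP t hqt)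
    · rw [← hT, Ideal.span_le]
      intro t ht
      refine Ideal.span_mono ?_ (hQft ⟨t, ht⟩)
      intro x hx
      exact Finset.mem_coe.2 (Finset.mem_biUnion.2 ⟨⟨t, ht⟩, T.mem_attach ⟨t, ht⟩, hx⟩)
end Aux2
section Aux3
open MvPolynomial
open scoped Classical
variable {n : ℕ} {k : Type*} [Field k] (τ : TermOrder n)

lemma tau_leadExp_monomial {μ : Fin n →₀ ℕ} {c : k} (hc : c ≠ 0) :
    τ.leadExp (monomial μ c) = μ := by
  refine tau_leadExp_eq τ ?_ ?_
  · rw [MvPolynomial.support_monomial, if_neg hc]; simp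
  · intro β hβ hne
    rw [MvPolynomial.support_monomial, if_neg hc] at hβ
    simp at hβ
    exact absurd hβ hne

lemma supp_monomial_mul {δ γ : Fin n →₀ ℕ} {e : k} {g : MvPolynomial (Fin n) k}
    (hγ : γ ∈ (monomial δ e * g).support) : ∃ α ∈ g.support, γ = α + δ := by
  have h := MvPolynomial.mem_support_iff.1 hγ
  rw [MvPolynomial.coeff_monomial_mul'] at h
  by_cases hle : δ ≤ γ
  · rw [if_pos hle] at h
    refine ⟨γ - δ, ?_, (tsub_add_cancel_of_le hle).symm⟩
    rw [MvPolynomial.mem_support_iff]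
    intro h0; rw [h0, mul_zero] at h; exact h rfl
  · rw [if_neg hle] at h; exact absurd rfl h

lemma tau_initialTerm_mem {I : Ideal (MvPolynomial (Fin n) k)} {f : MvPolynomial (Fin n) k}
    (hfI : f ∈ I) (hf : f ≠ 0) : τ.initialTerm f ∈ τ.initialIdeal I :=
  Ideal.subset_span ⟨f, hfI, hf, rfl⟩

lemma tau_monomial_leadExp_mem {I : Ideal (MvPolynomial (Fin n) k)} {f : MvPolynomial (Fin n) k}
    (hfI : f ∈ I) (hf : f ≠ 0) : (monomial (τ.leadExp f) (1 : k)) ∈ τ.initialIdeal I := by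
  have h := tau_initialTerm_mem τ hfI hf
  have hc := tau_coeff_leadExp_ne_zero τ hf
  have : (monomial (τ.leadExp f) (1 : k)) = C (f.coeff (τ.leadExp f))⁻¹ * τ.initialTerm f := by
    rw [TermOrder.initialTerm, MvPolynomial.C_mul_monomial, inv_mul_cancel₀ hc]
  rw [this]
  exact Ideal.mul_mem_left _ _ h

lemma monomial_mem_of_smul {J : Ideal (MvPolynomial (Fin n) k)} {μ : Fin n →₀ ℕ} {c : k}
    (hc : c ≠ 0) (h : (monomial μ c) ∈ J) : (monomial μ (1 : k)) ∈ J := by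
  have : (monomial μ (1 : k)) = C c⁻¹ * monomial μ c := by
    rw [MvPolynomial.C_mul_monomial, inv_mul_cancel₀ hc]
  rw [this]
  exact Ideal.mul_mem_left _ _ h

lemma tau_division {I : Ideal (MvPolynomial (Fin n) k)}
    {Q : Finset (MvPolynomial (Fin n) k)}
    (hQ : ↑Q ⊆ {p | ∃ f ∈ I, f ≠ 0 ∧ p = τ.initialTerm f})
    (hQspan : Ideal.span (↑Q : Set (MvPolynomial (Fin n) k)) = τ.initialIdeal I)
    (f : MvPolynomial (Fin n) k) :
    ∃ g r, g ∈ I ∧ f = g + r ∧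
      ∀ α ∈ r.support, (monomial α (1 : k)) ∉ τ.initialIdeal I := by
  classical
  have hQmono : ∀ p ∈ (↑Q : Set (MvPolynomial (Fin n) k)), ∃ μ c, p = monomial μ c := by
    intro p hp
    obtain ⟨f₀, -, -, hp⟩ := hQ hp
    exact ⟨_, _, hp⟩
  suffices H : ∀ σ : Fin n →₀ ℕ, ∀ f : MvPolynomial (Fin n) k, τ.leadExp f = σ →
      ∃ g r, g ∈ I ∧ f = g + r ∧
        ∀ α ∈ r.support, (monomial α (1 : k)) ∉ τ.initialIdeal I by
    exact H _ f rfl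
  intro σ
  induction σ using (tau_wf τ).induction with
  | _ σ IH =>
  intro f hσ
  by_cases hf0 : f = 0
  · exact ⟨0, 0, zero_mem _, by rw [hf0]; simp, by simp⟩
  obtain ⟨hmem, hmax⟩ := tau_leadExp_spec τ hf0
  rw [hσ] at hmem hmax
  by_cases hM : (monomial σ (1 : k)) ∈ τ.initialIdeal I
  · -- reduce the leading term by a multiple of a generator
    rw [← hQspan] at hM
    have hσsupp : σ ∈ (monomial σ (1 : k)).support := by
      rw [MvPolynomial.support_monomial, if_neg (one_ne_zero : (1:k) ≠ 0)]; simp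
    obtain ⟨p, hpQ, μ, c, hc, hpeq, hle⟩ :=
      exists_dvd_of_mem_span_monomials hQmono hM hσsupp
    obtain ⟨f₀, hf₀I, hf₀0, hpinit⟩ := hQ hpQ
    have hlexp : τ.leadExp f₀ = μ ∧ f₀.coeff (τ.leadExp f₀) = c := by
      rw [hpinit, TermOrder.initialTerm] at hpeq
      rcases (MvPolynomial.monomial_eq_monomial_iff _ _ _ _).1 hpeq with ⟨h1, h2⟩ | ⟨h1, h2⟩
      · exact ⟨h1, h2⟩
      · exact absurd h2 hc
    set δ := σ - μ with hδ
    have hδμ : δ + μ = σ := by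
      rw [hδ, tsub_add_cancel_of_le hle]
    set m := monomial δ (f.coeff σ * c⁻¹) * f₀ with hm
    have hsuppm : ∀ γ ∈ m.support, γ = σ ∨ τ.lt γ σ := by
      intro γ hγ
      obtain ⟨α, hα, rfl⟩ := supp_monomial_mul hγ
      obtain ⟨hα1, hα2⟩ := tau_leadExp_spec τ hf₀0
      by_cases hαμ : α = τ.leadExp f₀
      · left; rw [hαμ, hlexp.1, add_comm, hδμ]
      · right
        have := τ.add_right α (τ.leadExp f₀) δ (hα2 α hα hαμ)
        rw [hlexp.1] at this
        rwa [add_comm μ δ, hδμ] at this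
    have hcm : m.coeff σ = f.coeff σ := by
      rw [hm, MvPolynomial.coeff_monomial_mul']
      have hle' : δ ≤ σ := by rw [hδ]; exact tsub_le_self
      rw [if_pos hle']
      have : σ - δ = μ := by rw [hδ, tsub_tsub_cancel_of_le hle]
      rw [this, ← hlexp.1, hlexp.2, mul_assoc, inv_mul_cancel₀ hc, mul_one]
    set f' := f - m with hf'
    have hsuppf' : ∀ γ ∈ f'.support, τ.lt γ σ := by
      intro γ hγ
      have hγσ : γ ≠ σ := by
        intro h
        have : f'.coeff σ = 0 := by rw [hf', MvPolynomial.coeff_sub, hcm, sub_self]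
        rw [h] at hγ
        exact MvPolynomial.mem_support_iff.1 hγ this
      have : γ ∈ f.support ∪ m.support := MvPolynomial.support_sub _ _ _ hγ
      rcases Finset.mem_union.1 this with h | h
      · exact hmax γ h hγσ
      · rcases hsuppm γ h with h' | h'
        · exact absurd h' hγσ
        · exact h'
    by_cases hf'0 : f' = 0
    · refine ⟨m, 0, Ideal.mul_mem_left _ _ hf₀I, ?_, by simp⟩
      have : f = m := by rw [← sub_eq_zero]; exact hf'0
      rw [this, add_zero]
    · have hlt : τ.lt (τ.leadExp f') σ :=
        hsuppf' _ (tau_leadExp_spec τ hf'0).1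
      obtain ⟨g, r, hgI, hgr, hr⟩ := IH _ hlt f' rfl
      refine ⟨m + g, r, I.add_mem (Ideal.mul_mem_left _ _ hf₀I) hgI, ?_, hr⟩
      rw [add_assoc, ← hgr, hf']
      ring
  · -- the leading term is already standard; strip it off
    set f' := f - τ.initialTerm f with hf'
    have hsuppf' : ∀ γ ∈ f'.support, τ.lt γ σ := by
      intro γ hγ
      have hγσ : γ ≠ σ := by
        intro h
        have : f'.coeff σ = 0 := by
          rw [hf', MvPolynomial.coeff_sub, TermOrder.initialTerm, hσ,
            MvPolynomial.coeff_monomial, if_pos rfl, sub_self]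
        rw [h] at hγ
        exact MvPolynomial.mem_support_iff.1 hγ this
      have : γ ∈ f.support ∪ (τ.initialTerm f).support :=
        MvPolynomial.support_sub _ _ _ hγ
      rcases Finset.mem_union.1 this with h | h
      · exact hmax γ h hγσ
      · exfalso
        rw [TermOrder.initialTerm, hσ] at h
        have := MvPolynomial.support_monomial_subset h
        simp at this
        exact hγσ this
    by_cases hf'0 : f' = 0
    · refine ⟨0, f, zero_mem _, by rw [zero_add], ?_⟩
      intro α hα
      have hα' : α = σ := by
        by_contra hne
        have : α ∈ f'.support := by
          rw [MvPolynomial.mem_support_iff, hf', MvPolynomial.coeff_sub,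
            TermOrder.initialTerm, hσ, MvPolynomial.coeff_monomial, if_neg (Ne.symm hne),
            sub_zero]
          exact MvPolynomial.mem_support_iff.1 hα
        rw [hf'0] at this; simp at this
      rwa [hα']
    · have hlt : τ.lt (τ.leadExp f') σ :=
        hsuppf' _ (tau_leadExp_spec τ hf'0).1
      obtain ⟨g, r, hgI, hgr, hr⟩ := IH _ hlt f' rfl
      refine ⟨g, r + τ.initialTerm f, hgI, ?_, ?_⟩
      · rw [← add_assoc, ← hgr, hf']; ring
      · intro α hα
        rcases Finset.mem_union.1 (MvPolynomial.support_add hα) with h | h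
        · exact hr α h
        · rw [TermOrder.initialTerm, hσ] at h
          have := MvPolynomial.support_monomial_subset h
          simp at this
          rwa [this]
end Aux3
section Aux4
open MvPolynomial
open scoped Classical
variable {n : ℕ} {k : Type*} [Field k] (τ : TermOrder n)

/-- Existence of a finite "reduced Gröbner basis"-like family for `I` w.r.t. `τ`. -/
lemma tau_SG (I : Ideal (MvPolynomial (Fin n) k)) :
    ∃ (s : Finset (Fin n →₀ ℕ)) (G : (Fin n →₀ ℕ) → MvPolynomial (Fin n) k),
      Ideal.span ((fun μ => (monomial μ (1 : k))) '' ↑s) = τ.initialIdeal I ∧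
      ∀ μ ∈ s, G μ ∈ I ∧ (G μ).coeff μ = 1 ∧ τ.leadExp (G μ) = μ ∧
        ∀ α ∈ (G μ).support, α ≠ μ → (monomial α (1 : k)) ∉ τ.initialIdeal I := by
  classical
  set Gen := {p | ∃ f ∈ I, f ≠ 0 ∧ p = τ.initialTerm f} with hGen
  have hGenspan : Ideal.span Gen = τ.initialIdeal I := rfl
  obtain ⟨Q, hQGen, hQspan⟩ := exists_finset_span Gen
  rw [hGenspan] at hQspan
  -- each element of Q is a monomial with nonzero coefficient whose exponent is its leadExp
  have hQfacts : ∀ q ∈ Q, ∃ c : k, c ≠ 0 ∧ q = monomial (τ.leadExp q) c := by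
    intro q hq
    obtain ⟨f₀, -, hf₀0, hqeq⟩ := hQGen hq
    refine ⟨f₀.coeff (τ.leadExp f₀), tau_coeff_leadExp_ne_zero τ hf₀0, ?_⟩
    have : τ.leadExp q = τ.leadExp f₀ := by
      rw [hqeq, TermOrder.initialTerm, tau_leadExp_monomial τ (tau_coeff_leadExp_ne_zero τ hf₀0)]
    rw [this, hqeq, TermOrder.initialTerm]
  set s := Q.image τ.leadExp with hs
  -- the monomials with exponents in s span the initial ideal
  have hspan : Ideal.span ((fun μ => (monomial μ (1 : k))) '' ↑s) = τ.initialIdeal I := by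
    apply le_antisymm
    · rw [Ideal.span_le]
      rintro p ⟨μ, hμ, rfl⟩
      obtain ⟨q, hq, rfl⟩ := Finset.mem_image.1 (by exact_mod_cast hμ)
      obtain ⟨c, hc, hqeq⟩ := hQfacts q hq
      have hqM : q ∈ τ.initialIdeal I := by
        rw [← hQspan]; exact Ideal.subset_span hq
      rw [hqeq] at hqM
      exact monomial_mem_of_smul hc hqM
    · rw [← hQspan, Ideal.span_le]
      intro q hq
      obtain ⟨c, hc, hqeq⟩ := hQfacts q hq
      have h1 : (monomial (τ.leadExp q) (1 : k)) ∈
          Ideal.span ((fun μ => (monomial μ (1 : k))) '' ↑s) := by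
        refine Ideal.subset_span ⟨τ.leadExp q, ?_, rfl⟩
        exact_mod_cast Finset.mem_image_of_mem τ.leadExp hq
      have : q = C c * monomial (τ.leadExp q) (1 : k) := by
        rw [MvPolynomial.C_mul_monomial, mul_one, ← hqeq]
      rw [this]
      exact Ideal.mul_mem_left _ _ h1
  -- construct G via division with remainder
  have hdiv := fun μ : Fin n →₀ ℕ => tau_division τ hQGen hQspan (monomial μ (1 : k))
  choose G R hGI hGR hRstd using hdiv
  refine ⟨s, G, hspan, ?_⟩
  intro μ hμ
  have hμM : (monomial μ (1 : k)) ∈ τ.initialIdeal I := by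
    rw [← hspan]
    exact Ideal.subset_span ⟨μ, by exact_mod_cast hμ, rfl⟩
  have hcoeffR : (R μ).coeff μ = 0 := by
    by_contra h
    exact hRstd μ μ (MvPolynomial.mem_support_iff.2 h) hμM
  have hGeq : G μ = monomial μ (1 : k) - R μ := by
    rw [hGR μ]; ring
  have hcoeffG : (G μ).coeff μ = 1 := by
    rw [hGeq, MvPolynomial.coeff_sub, hcoeffR, sub_zero, MvPolynomial.coeff_monomial, if_pos rfl]
  have hG0 : G μ ≠ 0 := by
    intro h
    rw [h] at hcoeffG
    simp at hcoeffG
  have hsuppG : ∀ α ∈ (G μ).support, α = μ ∨ α ∈ (R μ).support := by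
    intro α hα
    by_cases hαμ : α = μ
    · exact Or.inl hαμ
    · right
      rw [MvPolynomial.mem_support_iff]
      intro h0
      have : (G μ).coeff α = 0 := by
        rw [hGeq, MvPolynomial.coeff_sub, h0, sub_zero, MvPolynomial.coeff_monomial,
          if_neg (fun h => hαμ h.symm)]
      exact MvPolynomial.mem_support_iff.1 hα this
  have hlexpG : τ.leadExp (G μ) = μ := by
    have h1 : (monomial (τ.leadExp (G μ)) (1 : k)) ∈ τ.initialIdeal I :=
      tau_monomial_leadExp_mem τ (hGI μ) hG0
    rcases hsuppG _ (tau_leadExp_spec τ hG0).1 with h | h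
    · exact h
    · exact absurd h1 (hRstd μ _ h)
  refine ⟨hGI μ, hcoeffG, hlexpG, ?_⟩
  intro α hα hαμ
  rcases hsuppG α hα with h | h
  · exact absurd h hαμ
  · exact hRstd μ α h
end Aux4
section Aux5
open MvPolynomial
open scoped Classical
variable {n : ℕ} {k : Type*} [Field k] (τ : TermOrder n)

lemma initialForm_zero (ω : Fin n → ℝ) : initialForm ω (0 : MvPolynomial (Fin n) k) = 0 := by
  apply MvPolynomial.ext
  intro γ
  rw [coeff_initialForm]
  simp

lemma initialForm_monomial_mul (ω : Fin n → ℝ) (δ : Fin n →₀ ℕ) (e : k)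
    (q : MvPolynomial (Fin n) k) :
    initialForm ω (monomial δ e * q) = monomial δ e * initialForm ω q := by
  by_cases he : e = 0
  · rw [he]
    simp [initialForm_zero]
  apply MvPolynomial.ext
  intro γ
  rw [coeff_initialForm, MvPolynomial.coeff_monomial_mul', MvPolynomial.coeff_monomial_mul']
  by_cases hle : δ ≤ γ
  · rw [if_pos hle, if_pos hle, coeff_initialForm]
    have hγ : (γ - δ) + δ = γ := tsub_add_cancel_of_le hle
    have hiso : isMaxIn ω (monomial δ e * q) γ ↔ isMaxIn ω q (γ - δ) := by
      constructor
      · intro hmax β hβ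
        have hβ' : β + δ ∈ (monomial δ e * q).support := by
          rw [MvPolynomial.mem_support_iff, MvPolynomial.coeff_monomial_mul',
            if_pos (le_add_self : δ ≤ β + δ), add_tsub_cancel_right]
          exact mul_ne_zero he (MvPolynomial.mem_support_iff.1 hβ)
        have := hmax _ hβ'
        rw [← hγ, wdeg_add, wdeg_add] at this
        linarith
      · intro hmax β' hβ'
        obtain ⟨α, hα, rfl⟩ := supp_monomial_mul hβ'
        have := hmax α hα
        rw [← hγ, wdeg_add, wdeg_add]
        linarith
    by_cases hmax : isMaxIn ω q (γ - δ)
    · rw [if_pos (hiso.2 hmax), if_pos hmax]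
    · rw [if_neg (fun h => hmax (hiso.1 h)), if_neg hmax, mul_zero]
  · rw [if_neg hle, if_neg hle]
    rw [ite_eq_right_iff]
    intro
    rfl

/-- Every element of `in_v(I)` is a multiset sum of initial forms of elements of `I`. -/
lemma initialFormIdeal_decompose (v : Fin n → ℝ) (I : Ideal (MvPolynomial (Fin n) k))
    {h : MvPolynomial (Fin n) k} (hh : h ∈ initialFormIdeal v I) :
    ∃ T : Multiset (MvPolynomial (Fin n) k), (∀ q ∈ T, q ∈ I) ∧
      h = (T.map (initialForm v)).sum := by
  classical
  have hsingle : ∀ (r q : MvPolynomial (Fin n) k), q ∈ I →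
      ∃ T : Multiset (MvPolynomial (Fin n) k), (∀ p ∈ T, p ∈ I) ∧
        r * initialForm v q = (T.map (initialForm v)).sum := by
    intro r q hq
    refine ⟨r.support.val.map (fun δ => monomial δ (r.coeff δ) * q), ?_, ?_⟩
    · intro p hp
      obtain ⟨δ, -, rfl⟩ := Multiset.mem_map.1 hp
      exact Ideal.mul_mem_left _ _ hq
    · rw [Multiset.map_map]
      have : ∀ δ ∈ r.support.val,
          (initialForm v ∘ fun δ => monomial δ (r.coeff δ) * q) δ =
          monomial δ (r.coeff δ) * initialForm v q := by
        intro δ _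
        exact initialForm_monomial_mul v δ _ q
      rw [Multiset.map_congr rfl this]
      have : (Multiset.map (fun δ => monomial δ (r.coeff δ) * initialForm v q) r.support.val).sum
          = (∑ δ ∈ r.support, monomial δ (r.coeff δ)) * initialForm v q := by
        rw [Finset.sum_mul, Finset.sum]
      rw [this, ← MvPolynomial.as_sum]
  have hmul : ∀ (r : MvPolynomial (Fin n) k) (T : Multiset (MvPolynomial (Fin n) k)),
      (∀ q ∈ T, q ∈ I) →
      ∃ T' : Multiset (MvPolynomial (Fin n) k), (∀ q ∈ T', q ∈ I) ∧
        r * (T.map (initialForm v)).sum = (T'.map (initialForm v)).sum := by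
    intro r T
    induction T using Multiset.induction with
    | empty => intro _; exact ⟨0, by simp, by simp⟩
    | cons q T ih =>
      intro hmem
      obtain ⟨T', hT', hsum⟩ := ih (fun p hp => hmem p (Multiset.mem_cons_of_mem hp))
      obtain ⟨T₀, hT₀, hsum₀⟩ := hsingle r q (hmem q (Multiset.mem_cons_self _ _))
      refine ⟨T₀ + T', ?_, ?_⟩
      · intro p hp
        rcases Multiset.mem_add.1 hp with hp | hp
        · exact hT₀ p hp
        · exact hT' p hp
      · rw [Multiset.map_cons, Multiset.sum_cons, mul_add, hsum, hsum₀,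
          Multiset.map_add, Multiset.sum_add]
  refine Submodule.span_induction ?_ ?_ ?_ ?_ hh
  · rintro p ⟨f, hfI, rfl⟩
    exact ⟨{f}, by simpa using hfI, by simp⟩
  · exact ⟨0, by simp, by simp⟩
  · rintro x y - - ⟨T₁, hT₁, hs₁⟩ ⟨T₂, hT₂, hs₂⟩
    refine ⟨T₁ + T₂, ?_, ?_⟩
    · intro q hq
      rcases Multiset.mem_add.1 hq with hq | hq
      · exact hT₁ q hq
      · exact hT₂ q hq
    · rw [hs₁, hs₂, Multiset.map_add, Multiset.sum_add]
  · rintro r x - ⟨T, hT, hs⟩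
    obtain ⟨T', hT', hsum⟩ := hmul r T hT
    refine ⟨T', hT', ?_⟩
    rw [smul_eq_mul, hs, hsum]
end Aux5
/-- If `v ∈ C_≺(I)` then `in_≺(in_v(I)) = in_≺(I)`. -/
theorem initialIdeal_initialFormIdeal (τ : TermOrder n)
    (I : Ideal (MvPolynomial (Fin n) k)) (v : Fin n → ℝ) (hv : v ∈ Cprec τ I) :
    τ.initialIdeal (initialFormIdeal v I) = τ.initialIdeal I := by
  classical
  obtain ⟨s, G, hspan, hG⟩ := tau_SG τ I
  have hv' : v ∈ closure {u : Fin n → ℝ | initialFormIdeal u I = τ.initialIdeal I} := hv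
  set S := {u : Fin n → ℝ | initialFormIdeal u I = τ.initialIdeal I} with hSdef
  have hPmono : ∀ p ∈ ((fun μ => (monomial μ (1 : k))) '' (↑s : Set (Fin n →₀ ℕ))), ∃ μ c, p = monomial μ c := by
    rintro p ⟨μ, -, rfl⟩; exact ⟨μ, 1, rfl⟩
  have hcont : ∀ α : Fin n →₀ ℕ, Continuous fun u : Fin n → ℝ => wdeg u α := by
    intro α
    have : (fun u : Fin n → ℝ => wdeg u α) = fun u => ∑ i : Fin n, u i * (α i : ℝ) := rfl
    rw [this]
    exact continuous_finset_sum _ (fun i _ => (continuous_apply i).mul continuous_const)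
  have hG0 : ∀ μ ∈ s, G μ ≠ 0 := by
    intro μ hμ h
    have := (hG μ hμ).2.1
    rw [h] at this; simp at this
  -- (F1) for `u ∈ S`, all monomials of `in_u(f)`, `f ∈ I`, lie in the initial ideal
  have hF1 : ∀ u ∈ S, ∀ f ∈ I, ∀ α ∈ (initialForm u f).support,
      (monomial α (1 : k)) ∈ τ.initialIdeal I := by
    intro u hu f hfI α hα
    have h1 : initialForm u f ∈ initialFormIdeal u I := Ideal.subset_span ⟨f, hfI, rfl⟩
    rw [Set.mem_setOf_eq] at hu
    rw [hu, ← hspan] at h1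
    rw [← hspan]
    exact monomial_one_mem_of_mem_span_monomials hPmono h1 hα
  -- (F2) facet inequalities hold on S
  have hF2 : ∀ μ ∈ s, ∀ u ∈ S, ∀ α ∈ (G μ).support, wdeg u α ≤ wdeg u μ := by
    intro μ hμ u hu α hα
    obtain ⟨hGI, hGc, hGl, hGt⟩ := hG μ hμ
    have h0 : initialForm u (G μ) ≠ 0 := initialForm_ne_zero (hG0 μ hμ)
    obtain ⟨γ, hγ⟩ := MvPolynomial.support_nonempty.2 h0
    have hγs := mem_support_initialForm.1 hγ
    have hγM : (monomial γ (1 : k)) ∈ τ.initialIdeal I := hF1 u hu (G μ) hGI γ hγ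
    have hγμ : γ = μ := by
      by_contra hne
      exact hGt γ hγs.1 hne hγM
    rw [hγμ] at hγs
    exact hγs.2 α hα
  -- (F3) hence they hold at `v`
  have hF3 : ∀ μ ∈ s, ∀ α ∈ (G μ).support, wdeg v α ≤ wdeg v μ := by
    intro μ hμ α hα
    have hclosed : IsClosed {u : Fin n → ℝ | wdeg u α ≤ wdeg u μ} :=
      isClosed_le (hcont α) (hcont μ)
    have hsub : S ⊆ {u | wdeg u α ≤ wdeg u μ} := fun u hu => hF2 μ hμ u hu α hα
    exact closure_minimal hsub hclosed hv'
  -- (F4) perturbation: `u ∈ S` close to `v` refines the `v`-initial form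
  have hF4 : ∀ f : MvPolynomial (Fin n) k, f ≠ 0 →
      ∃ u ∈ S, (initialForm u f).support ⊆ (initialForm v f).support := by
    intro f hf
    have hif0 : initialForm v f ≠ 0 := initialForm_ne_zero hf
    obtain ⟨α₀, hα₀⟩ := MvPolynomial.support_nonempty.2 hif0
    have hα₀s := mem_support_initialForm.1 hα₀
    set T := f.support.filter (fun γ => γ ∉ (initialForm v f).support) with hT
    set U := ⋂ γ ∈ T, {u : Fin n → ℝ | wdeg u γ < wdeg u α₀} with hU
    have hUopen : IsOpen U :=
      isOpen_biInter_finset (fun γ _ => isOpen_lt (hcont γ) (hcont α₀))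
    have hvU : v ∈ U := by
      rw [hU, Set.mem_iInter₂]
      intro γ hγ
      rw [hT, Finset.mem_filter] at hγ
      obtain ⟨hγf, hγnv⟩ := hγ
      have hnmax : ¬ isMaxIn v f γ := fun hmax => hγnv (mem_support_initialForm.2 ⟨hγf, hmax⟩)
      rw [isMaxIn] at hnmax
      push_neg at hnmax
      obtain ⟨β, hβf, hβlt⟩ := hnmax
      exact lt_of_lt_of_le hβlt (hα₀s.2 β hβf)
    obtain ⟨u, huU, huS⟩ := _root_.mem_closure_iff.1 hv' U hUopen hvU
    refine ⟨u, huS, ?_⟩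
    intro γ hγ
    have hγs := mem_support_initialForm.1 hγ
    by_contra hγv
    have h1 : wdeg u γ < wdeg u α₀ := by
      have := Set.mem_iInter₂.1 huU γ (by rw [hT, Finset.mem_filter]; exact ⟨hγs.1, hγv⟩)
      exact this
    have h2 : wdeg u α₀ ≤ wdeg u γ := hγs.2 α₀ hα₀s.1
    linarith
  -- (F5) every `in_v(f)` has some monomial in the initial ideal
  have hF5 : ∀ f ∈ I, f ≠ 0 → ∃ γ ∈ (initialForm v f).support,
      (monomial γ (1 : k)) ∈ τ.initialIdeal I := by
    intro f hfI hf
    obtain ⟨u, huS, hsub⟩ := hF4 f hf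
    obtain ⟨γ, hγ⟩ := MvPolynomial.support_nonempty.2 (initialForm_ne_zero (ω := u) hf)
    exact ⟨γ, hsub hγ, hF1 u huS f hfI γ hγ⟩
  -- (E) descent: the leading monomial of `in_v(f)` lies in the initial ideal
  have hE' : ∀ σ : Fin n →₀ ℕ, ∀ f, f ∈ I → f ≠ 0 →
      σ ∈ (initialForm v f).support → (monomial σ (1 : k)) ∈ τ.initialIdeal I →
      (∀ γ ∈ (initialForm v f).support, (monomial γ (1 : k)) ∈ τ.initialIdeal I →
        γ ≠ σ → τ.lt γ σ) →
      (monomial (τ.leadExp (initialForm v f)) (1 : k)) ∈ τ.initialIdeal I := by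
    intro σ
    induction σ using (tau_wf τ).induction with
    | _ σ IH =>
    intro f hfI hf0 hσsupp hσM hσmax
    have hif0 : initialForm v f ≠ 0 := initialForm_ne_zero hf0
    obtain ⟨hβsupp, hβmax⟩ := tau_leadExp_spec τ hif0
    set β := τ.leadExp (initialForm v f) with hβdef
    by_cases hβM : (monomial β (1 : k)) ∈ τ.initialIdeal I
    · exact hβM
    have hβσ : β ≠ σ := fun h => hβM (by rw [h]; exact hσM)
    have hσβ : τ.lt σ β := hβmax σ hσsupp (fun h => hβσ h.symm)
    obtain ⟨hβf, hβw⟩ := mem_support_initialForm.1 hβsupp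
    obtain ⟨hσf, hσw⟩ := mem_support_initialForm.1 hσsupp
    have hσM' : (monomial σ (1 : k)) ∈ Ideal.span ((fun μ => (monomial μ (1 : k))) '' ↑s) := by
      rw [hspan]; exact hσM
    have hσself : σ ∈ (monomial σ (1 : k)).support := by
      rw [MvPolynomial.support_monomial, if_neg (one_ne_zero : (1 : k) ≠ 0)]; simp
    obtain ⟨p, hp, μ', c, hc, hpeq, hle⟩ :=
      exists_dvd_of_mem_span_monomials hPmono hσM' hσself
    obtain ⟨μ, hμs, hpμ⟩ := hp
    have hμeq : μ = μ' := by
      rw [← hpμ] at hpeq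
      rcases (MvPolynomial.monomial_eq_monomial_iff _ _ _ _).1 hpeq with ⟨h1, h2⟩ | ⟨h1, h2⟩
      · exact h1
      · exact absurd h1 one_ne_zero
    rw [← hμeq] at hle
    have hμs' : μ ∈ s := by exact_mod_cast hμs
    obtain ⟨hGI, hGc, hGl, hGt⟩ := hG μ hμs'
    have hg0 : G μ ≠ 0 := hG0 μ hμs'
    set δ := σ - μ with hδ
    have hδμ : δ + μ = σ := by rw [hδ]; exact tsub_add_cancel_of_le hle
    set c₀ := f.coeff σ with hc₀
    have hc₀0 : c₀ ≠ 0 := MvPolynomial.mem_support_iff.1 hσf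
    set m := monomial δ c₀ * G μ with hm
    have hsuppm : ∀ γ ∈ m.support, γ = σ ∨ τ.lt γ σ := by
      intro γ hγ
      obtain ⟨α, hα, rfl⟩ := supp_monomial_mul hγ
      obtain ⟨hl1, hl2⟩ := tau_leadExp_spec τ hg0
      by_cases hαl : α = τ.leadExp (G μ)
      · left; rw [hαl, hGl, add_comm, hδμ]
      · right
        have := τ.add_right α (τ.leadExp (G μ)) δ (hl2 α hα hαl)
        rw [hGl] at this
        rwa [add_comm μ δ, hδμ] at this
    have hwm : ∀ γ ∈ m.support, wdeg v γ ≤ wdeg v σ := by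
      intro γ hγ
      obtain ⟨α, hα, rfl⟩ := supp_monomial_mul hγ
      have h1 : wdeg v α ≤ wdeg v μ := hF3 μ hμs' α hα
      rw [← hδμ, wdeg_add, wdeg_add]
      linarith
    have hcm : m.coeff σ = c₀ := by
      rw [hm, MvPolynomial.coeff_monomial_mul']
      have hle' : δ ≤ σ := by rw [hδ]; exact tsub_le_self
      rw [if_pos hle']
      have hσδ : σ - δ = μ := by rw [hδ]; exact tsub_tsub_cancel_of_le hle
      rw [hσδ, hGc, mul_one]
    set f' := f - m with hf'
    have hσf' : f'.coeff σ = 0 := by rw [hf', MvPolynomial.coeff_sub, hcm, sub_self]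
    have hβm : β ∉ m.support := by
      intro h
      rcases hsuppm β h with h' | h'
      · exact hβσ h'
      · exact tau_asymm τ hσβ h'
    have hβf' : f'.coeff β = f.coeff β := by
      rw [hf', MvPolynomial.coeff_sub, MvPolynomial.notMem_support_iff.1 hβm, sub_zero]
    have hf'0 : f' ≠ 0 := by
      intro h
      have h2 := MvPolynomial.mem_support_iff.1 hβf
      rw [← hβf'] at h2
      rw [h] at h2; simp at h2
    have hwσβ : wdeg v σ = wdeg v β := le_antisymm (hβw σ hσf) (hσw β hβf)
    have hwf' : ∀ γ ∈ f'.support, wdeg v γ ≤ wdeg v β := by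
      intro γ hγ
      rcases Finset.mem_union.1 (MvPolynomial.support_sub _ _ _ hγ) with h | h
      · exact hβw γ h
      · rw [← hwσβ]; exact hwm γ h
    have hβf's : β ∈ f'.support := by
      rw [MvPolynomial.mem_support_iff, hβf']
      exact MvPolynomial.mem_support_iff.1 hβf
    have hβsupp' : β ∈ (initialForm v f').support :=
      mem_support_initialForm.2 ⟨hβf's, fun γ hγ => hwf' γ hγ⟩
    have hsplit : ∀ γ ∈ (initialForm v f').support,
        γ ∈ m.support ∨ γ ∈ (initialForm v f).support := by
      intro γ hγ
      obtain ⟨hγf', hγw⟩ := mem_support_initialForm.1 hγ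
      rcases Finset.mem_union.1 (MvPolynomial.support_sub _ _ _ hγf') with h | h
      · right
        refine mem_support_initialForm.2 ⟨h, ?_⟩
        intro γ' hγ'
        have h1 : wdeg v β ≤ wdeg v γ := hγw β hβf's
        exact le_trans (hβw γ' hγ') h1
      · exact Or.inl h
    have hkey : ∀ γ ∈ (initialForm v f').support, γ ≠ β → τ.lt γ β := by
      intro γ hγ hγβ
      rcases hsplit γ hγ with h | h
      · rcases hsuppm γ h with h' | h'
        · exfalso
          have h2 : γ ∈ f'.support := (mem_support_initialForm.1 hγ).1
          rw [h'] at h2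
          exact MvPolynomial.mem_support_iff.1 h2 hσf'
        · exact τ.trans _ _ _ h' hσβ
      · exact hβmax γ h hγβ
    have hlexp' : τ.leadExp (initialForm v f') = β := tau_leadExp_eq τ hβsupp' hkey
    have hTbound : ∀ γ ∈ (initialForm v f').support,
        (monomial γ (1 : k)) ∈ τ.initialIdeal I → τ.lt γ σ := by
      intro γ hγ hγM
      have hγσ : γ ≠ σ := by
        intro h
        have h2 : γ ∈ f'.support := (mem_support_initialForm.1 hγ).1
        rw [h] at h2
        exact MvPolynomial.mem_support_iff.1 h2 hσf'
      rcases hsplit γ hγ with h | h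
      · rcases hsuppm γ h with h' | h'
        · exact absurd h' hγσ
        · exact h'
      · exact hσmax γ h hγM hγσ
    have hf'I : f' ∈ I := I.sub_mem hfI (Ideal.mul_mem_left _ _ hGI)
    obtain ⟨γ₀, hγ₀, hγ₀M⟩ := hF5 f' hf'I hf'0
    set T' := (initialForm v f').support.filter
      (fun γ => (monomial γ (1 : k)) ∈ τ.initialIdeal I) with hT'
    have hT'ne : T'.Nonempty := ⟨γ₀, by rw [hT', Finset.mem_filter]; exact ⟨hγ₀, hγ₀M⟩⟩
    obtain ⟨σ', hσ'T, hσ'max⟩ := tau_finset_max τ hT'ne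
    rw [hT', Finset.mem_filter] at hσ'T
    have hσ'σ : τ.lt σ' σ := hTbound σ' hσ'T.1 hσ'T.2
    have hfin := IH σ' hσ'σ f' hf'I hf'0 hσ'T.1 hσ'T.2
      (fun γ hγ hγM hγσ' => hσ'max γ (by rw [hT', Finset.mem_filter]; exact ⟨hγ, hγM⟩) hγσ')
    rwa [hlexp'] at hfin
  have hE : ∀ f ∈ I, f ≠ 0 →
      (monomial (τ.leadExp (initialForm v f)) (1 : k)) ∈ τ.initialIdeal I := by
    intro f hfI hf0
    obtain ⟨γ₀, hγ₀, hγ₀M⟩ := hF5 f hfI hf0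
    set T := (initialForm v f).support.filter
      (fun γ => (monomial γ (1 : k)) ∈ τ.initialIdeal I) with hT
    have hTne : T.Nonempty := ⟨γ₀, by rw [hT, Finset.mem_filter]; exact ⟨hγ₀, hγ₀M⟩⟩
    obtain ⟨σ, hσT, hσmax⟩ := tau_finset_max τ hTne
    rw [hT, Finset.mem_filter] at hσT
    refine hE' σ f hfI hf0 hσT.1 hσT.2 ?_
    intro γ hγ hγM hγσ
    exact hσmax γ (by rw [hT, Finset.mem_filter]; exact ⟨hγ, hγM⟩) hγσ
  -- coefficient of a multiset sum
  have hcoeffsum : ∀ (T : Multiset (MvPolynomial (Fin n) k)) (γ : Fin n →₀ ℕ),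
      T.sum.coeff γ = (T.map (fun q => q.coeff γ)).sum := by
    intro T γ
    induction T using Multiset.induction with
    | empty => simp
    | cons q T ih => simp [MvPolynomial.coeff_add, ih]
  have hsumzero : ∀ (T₀ : Multiset k), (∀ x ∈ T₀, x = 0) → T₀.sum = 0 := by
    intro T₀
    induction T₀ using Multiset.induction with
    | empty => intro _; simp
    | cons x T₀ ih =>
      intro hz
      rw [Multiset.sum_cons, hz x (Multiset.mem_cons_self _ _), zero_add]
      exact ih (fun y hy => hz y (Multiset.mem_cons_of_mem hy))
  have hsummem : ∀ (T : Multiset (MvPolynomial (Fin n) k)), (∀ q ∈ T, q ∈ I) → T.sum ∈ I := by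
    intro T
    induction T using Multiset.induction with
    | empty => intro _; rw [Multiset.sum_zero]; exact I.zero_mem

    | cons q T ih =>
      intro hm
      rw [Multiset.sum_cons]
      exact I.add_mem (hm q (Multiset.mem_cons_self _ _))
        (ih fun p hp => hm p (Multiset.mem_cons_of_mem hp))
  -- (D) decomposition: initial terms of members of `in_v(I)` come from single initial forms
  have hD : ∀ h ∈ initialFormIdeal v I, h ≠ 0 →
      ∃ F, F ∈ I ∧ F ≠ 0 ∧ τ.initialTerm h = τ.initialTerm (initialForm v F) := by
    intro h hh hh0
    obtain ⟨T, hTI, hTsum⟩ := initialFormIdeal_decompose v I hh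
    obtain ⟨hβsupp, hβmax⟩ := tau_leadExp_spec τ hh0
    set β := τ.leadExp h with hβdef
    set e := wdeg v β with he
    set P : MvPolynomial (Fin n) k → Prop :=
      fun q => (∀ α ∈ q.support, wdeg v α ≤ e) ∧ (∃ α ∈ q.support, wdeg v α = e) with hP
    set F := (T.filter P).sum with hF
    have helem : ∀ γ : Fin n →₀ ℕ, wdeg v γ = e → ∀ q : MvPolynomial (Fin n) k,
        (initialForm v q).coeff γ = if P q then q.coeff γ else 0 := by
      intro γ hγ q
      rw [coeff_initialForm]
      by_cases hPq : P q
      · rw [if_pos hPq, if_pos]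
        intro α hα
        rw [hγ]
        exact hPq.1 α hα
      · rw [if_neg hPq]
        by_cases hall : ∀ α ∈ q.support, wdeg v α ≤ e
        · have hγq : q.coeff γ = 0 := by
            by_contra h0
            exact hPq ⟨hall, γ, MvPolynomial.mem_support_iff.2 h0, hγ⟩
          rw [hγq, ite_self]
        · push_neg at hall
          obtain ⟨α, hα, hαgt⟩ := hall
          rw [if_neg]
          intro hmax
          have := hmax α hα
          rw [hγ] at this
          linarith
    have hfiltersum : ∀ (T₀ : Multiset (MvPolynomial (Fin n) k)) (γ : Fin n →₀ ℕ),
        wdeg v γ = e →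
        (T₀.map (fun q => (initialForm v q).coeff γ)).sum =
          ((T₀.filter P).map (fun q => q.coeff γ)).sum := by
      intro T₀ γ hγ
      induction T₀ using Multiset.induction with
      | empty => simp
      | cons q T₀ ih =>
        by_cases hPq : P q
        · rw [Multiset.map_cons, Multiset.sum_cons, Multiset.filter_cons_of_pos _ hPq,
            Multiset.map_cons, Multiset.sum_cons, ih, helem γ hγ q, if_pos hPq]
        · rw [Multiset.map_cons, Multiset.sum_cons, Multiset.filter_cons_of_neg _ hPq,
            ih, helem γ hγ q, if_neg hPq, zero_add]
    have hcoeffe : ∀ γ : Fin n →₀ ℕ, wdeg v γ = e → h.coeff γ = F.coeff γ := by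
      intro γ hγ
      rw [hTsum, hcoeffsum, Multiset.map_map, hF, hcoeffsum]
      exact hfiltersum T γ hγ
    have hFI : F ∈ I := by
      rw [hF]
      exact hsummem _ (fun q hq => hTI q (Multiset.mem_of_mem_filter hq))
    have hFβ : F.coeff β = h.coeff β := (hcoeffe β rfl).symm
    have hhβ : h.coeff β ≠ 0 := MvPolynomial.mem_support_iff.1 hβsupp
    have hF0 : F ≠ 0 := by
      intro h0
      rw [h0] at hFβ
      simp at hFβ
      exact hhβ hFβ.symm
    have hsuppF : ∀ α ∈ F.support, wdeg v α ≤ e := by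
      intro α hα
      have h0 : F.coeff α ≠ 0 := MvPolynomial.mem_support_iff.1 hα
      rw [hF, hcoeffsum] at h0
      by_contra hgt
      apply h0
      have hz : ∀ x ∈ (T.filter P).map (fun q => q.coeff α), x = 0 := by
        intro x hx
        obtain ⟨q, hq, rfl⟩ := Multiset.mem_map.1 hx
        have hPq : P q := (Multiset.mem_filter.1 hq).2
        by_contra hx0
        exact hgt (hPq.1 α (MvPolynomial.mem_support_iff.2 hx0))
      exact hsumzero _ hz
    have hβF : β ∈ F.support := by
      rw [MvPolynomial.mem_support_iff, hFβ]
      exact hhβ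
    have hmaxF : isMaxIn v F β := fun γ hγ => (hsuppF γ hγ).trans he.le
    have hβivF : β ∈ (initialForm v F).support := mem_support_initialForm.2 ⟨hβF, hmaxF⟩
    have hmaxτ : ∀ γ ∈ (initialForm v F).support, γ ≠ β → τ.lt γ β := by
      intro γ hγ hγβ
      obtain ⟨hγF, hγw⟩ := mem_support_initialForm.1 hγ
      have h1 : wdeg v γ = e := le_antisymm (hsuppF γ hγF) (he ▸ hγw β hβF)
      have h2 : h.coeff γ ≠ 0 := by
        rw [hcoeffe γ h1]
        exact MvPolynomial.mem_support_iff.1 hγF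
      exact hβmax γ (MvPolynomial.mem_support_iff.2 h2) hγβ
    have hlexpF : τ.leadExp (initialForm v F) = β := tau_leadExp_eq τ hβivF hmaxτ
    refine ⟨F, hFI, hF0, ?_⟩
    rw [TermOrder.initialTerm, TermOrder.initialTerm, hlexpF]
    congr 1
    rw [coeff_initialForm, if_pos hmaxF, hFβ]
  -- conclusion
  apply le_antisymm
  · rw [TermOrder.initialIdeal, Ideal.span_le]
    rintro p ⟨h, hhJ, hh0, rfl⟩
    obtain ⟨F, hFI, hF0, heq⟩ := hD h hhJ hh0
    rw [heq, TermOrder.initialTerm]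
    have h1 := hE F hFI hF0
    have h2 : (monomial (τ.leadExp (initialForm v F))
        ((initialForm v F).coeff (τ.leadExp (initialForm v F))))
        = C ((initialForm v F).coeff (τ.leadExp (initialForm v F))) *
          (monomial (τ.leadExp (initialForm v F)) (1 : k)) := by
      rw [MvPolynomial.C_mul_monomial, mul_one]
    rw [h2]
    exact Ideal.mul_mem_left _ _ h1
  · rw [← hspan, Ideal.span_le]
    rintro p ⟨μ, hμ, rfl⟩
    have hμs' : μ ∈ s := by exact_mod_cast hμ
    obtain ⟨hGI, hGc, hGl, hGt⟩ := hG μ hμs'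
    have hg0 : G μ ≠ 0 := hG0 μ hμs'
    have hμsupp : μ ∈ (G μ).support := MvPolynomial.mem_support_iff.2 (by rw [hGc]; exact one_ne_zero)
    have hμmax : isMaxIn v (G μ) μ := fun α hα => hF3 μ hμs' α hα
    have hμiv : μ ∈ (initialForm v (G μ)).support := mem_support_initialForm.2 ⟨hμsupp, hμmax⟩
    have hiv0 : initialForm v (G μ) ≠ 0 := by
      intro h
      rw [h] at hμiv; simp at hμiv
    have hlexp : τ.leadExp (initialForm v (G μ)) = μ := by
      refine tau_leadExp_eq τ hμiv ?_
      intro γ hγ hγμ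
      have hγs := (mem_support_initialForm.1 hγ).1
      have := (tau_leadExp_spec τ hg0).2 γ hγs (by rw [hGl]; exact hγμ)
      rwa [hGl] at this
    have hcoeff : (initialForm v (G μ)).coeff μ = 1 := by
      rw [coeff_initialForm, if_pos hμmax, hGc]
    have hmem : initialForm v (G μ) ∈ initialFormIdeal v I :=
      Ideal.subset_span ⟨G μ, hGI, rfl⟩
    have heq : (monomial μ (1 : k)) = τ.initialTerm (initialForm v (G μ)) := by
      rw [TermOrder.initialTerm, hlexp, hcoeff]
    show (monomial μ (1 : k)) ∈ τ.initialIdeal (initialFormIdeal v I)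
    rw [heq]
    exact tau_initialTerm_mem τ hmem hiv0
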